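/- Let a and b be distinct positive real numbers and let k be a real number with 0 < k ≤ 2. Then A_k(a,b) < S(a,b), where A_k is the power mean of order k and S(a,b) = (a^a · b^b)^(1/(a+b)). -/

import Mathlib

section PowerMeanAux
open Real Set

lemma nonneg_of_hasDerivAt {F F' : ℝ → ℝ} {c : ℝ}
    (hF0 : F 0 = 0)
    (hd : ∀ y ∈ Ico (0:ℝ) c, HasDerivAt F (F' y) y)
    (h' : ∀ y ∈ Ioo (0:ℝ) c, 0 ≤ F' y)
    {x : ℝ} (hx0 : 0 ≤ x) (hxc : x < c) : 0 ≤ F x := by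
  have hmono : MonotoneOn F (Ico (0:ℝ) c) := by
    apply monotoneOn_of_deriv_nonneg (convex_Ico 0 c)
    · exact fun y hy => (hd y hy).continuousAt.continuousWithinAt
    · rw [interior_Ico]
      exact fun y hy => (hd y (Ioo_subset_Ico_self hy)).differentiableAt.differentiableWithinAt
    · rw [interior_Ico]
      intro y hy
      rw [(hd y (Ioo_subset_Ico_self hy)).deriv]
      exact h' y hy
  have h0c : (0:ℝ) ∈ Ico (0:ℝ) c := ⟨le_refl 0, lt_of_le_of_lt hx0 hxc⟩
  have := hmono h0c ⟨hx0, hxc⟩ hx0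
  linarith [hF0 ▸ this]

lemma lem_log1sub {x : ℝ} (h0 : 0 ≤ x) (h1 : x < 1) :
    Real.log (1 - x) ≤ -x - x^2/2 := by
  have := nonneg_of_hasDerivAt (F := fun y => -Real.log (1 - y) - y - y^2/2)
    (F' := fun y => 1/(1-y) - 1 - y) (c := 1) (by norm_num)
    (fun y hy => by
      have hy1 : 1 - y > 0 := by simp only [mem_Ico] at hy; linarith [hy.2]
      have h1 : HasDerivAt (fun y : ℝ => 1 - y) (-1) y := by
        simpa using (hasDerivAt_id y).const_sub 1
      have h2 : HasDerivAt (fun y : ℝ => Real.log (1 - y)) (-1/(1-y)) y := by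
        simpa using (h1.log (ne_of_gt hy1))
      have h3 : HasDerivAt (fun y : ℝ => y^2/2) y y := by
        simpa using ((hasDerivAt_pow 2 y).div_const 2)
      have := (h2.neg.sub (hasDerivAt_id y)).sub h3
      refine this.congr_deriv ?_
      field_simp)
    (fun y hy => by
      simp only [mem_Ioo] at hy
      have : 1 - y > 0 := by linarith [hy.2]
      show (0:ℝ) ≤ 1/(1-y) - 1 - y
      have h : 1/(1-y) - 1 - y = y^2/(1-y) := by field_simp; ring
      rw [h]
      positivity)
    h0 h1
  linarith

lemma lem_onesub_mul_log {x : ℝ} (h0 : 0 ≤ x) (h1 : x < 1) :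
    -x + x^2/2 + x^3/6 ≤ (1-x) * Real.log (1-x) := by
  have := nonneg_of_hasDerivAt (F := fun y => (1-y) * Real.log (1-y) + y - y^2/2 - y^3/6)
    (F' := fun y => -Real.log (1-y) - y - y^2/2) (c := 1) (by norm_num)
    (fun y hy => by
      have hy1 : 1 - y > 0 := by simp only [mem_Ico] at hy; linarith [hy.2]
      have h1 : HasDerivAt (fun y : ℝ => 1 - y) (-1) y := by
        simpa using (hasDerivAt_id y).const_sub 1
      have h2 : HasDerivAt (fun y : ℝ => Real.log (1 - y)) (-1/(1-y)) y := by
        simpa using (h1.log (ne_of_gt hy1))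
      have h3 : HasDerivAt (fun y : ℝ => y^2/2) y y := by
        simpa using ((hasDerivAt_pow 2 y).div_const 2)
      have h4 : HasDerivAt (fun y : ℝ => y^3/6) (y^2/2) y := by
        have := (hasDerivAt_pow 3 y).div_const 6
        refine this.congr_deriv ?_
        push_cast
        ring
      have := (((h1.mul h2).add (hasDerivAt_id y)).sub h3).sub h4
      refine this.congr_deriv ?_
      field_simp
      ring)
    (fun y hy => by
      simp only [mem_Ioo] at hy
      have := lem_log1sub (le_of_lt hy.1) hy.2
      linarith)
    h0 h1
  linarith

lemma lem_log1add {x : ℝ} (h0 : 0 ≤ x) (h1 : x < 1) :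
    x - x^2/2 + x^3/3 - x^4/4 ≤ Real.log (1 + x) := by
  have := nonneg_of_hasDerivAt (F := fun y => Real.log (1 + y) - y + y^2/2 - y^3/3 + y^4/4)
    (F' := fun y => 1/(1+y) - 1 + y - y^2 + y^3) (c := 1) (by norm_num)
    (fun y hy => by
      have hy1 : 1 + y > 0 := by simp only [mem_Ico] at hy; linarith [hy.1]
      have h1 : HasDerivAt (fun y : ℝ => 1 + y) 1 y := by
        simpa using (hasDerivAt_id y).const_add 1
      have h2 : HasDerivAt (fun y : ℝ => Real.log (1 + y)) (1/(1+y)) y := by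
        simpa using (h1.log (ne_of_gt hy1))
      have h3 : HasDerivAt (fun y : ℝ => y^2/2) y y := by
        simpa using ((hasDerivAt_pow 2 y).div_const 2)
      have h4 : HasDerivAt (fun y : ℝ => y^3/3) (y^2) y := by
        have := (hasDerivAt_pow 3 y).div_const 3
        refine this.congr_deriv ?_
        push_cast
        ring
      have h5 : HasDerivAt (fun y : ℝ => y^4/4) (y^3) y := by
        have := (hasDerivAt_pow 4 y).div_const 4
        refine this.congr_deriv ?_
        push_cast
        ring
      have := (((h2.sub (hasDerivAt_id y)).add h3).sub h4).add h5
      exact this)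
    (fun y hy => by
      simp only [mem_Ioo] at hy
      have hy1 : 1 + y > 0 := by linarith [hy.1]
      show (0:ℝ) ≤ 1/(1+y) - 1 + y - y^2 + y^3
      have h : 1/(1+y) - 1 + y - y^2 + y^3 = y^4/(1+y) := by field_simp; ring
      rw [h]
      positivity)
    h0 h1
  linarith

lemma lem_log1add_le {t : ℝ} (h0 : 0 ≤ t) (h1 : t < 1) :
    Real.log (1 + t) ≤ t - t^2/2 + t^3/3 := by
  have := nonneg_of_hasDerivAt (F := fun y => y - y^2/2 + y^3/3 - Real.log (1 + y))
    (F' := fun y => 1 - y + y^2 - 1/(1+y)) (c := 1) (by norm_num)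
    (fun y hy => by
      have hy1 : 1 + y > 0 := by simp only [mem_Ico] at hy; linarith [hy.1]
      have h1 : HasDerivAt (fun y : ℝ => 1 + y) 1 y := by
        simpa using (hasDerivAt_id y).const_add 1
      have h2 : HasDerivAt (fun y : ℝ => Real.log (1 + y)) (1/(1+y)) y := by
        simpa using (h1.log (ne_of_gt hy1))
      have h3 : HasDerivAt (fun y : ℝ => y^2/2) y y := by
        simpa using ((hasDerivAt_pow 2 y).div_const 2)
      have h4 : HasDerivAt (fun y : ℝ => y^3/3) (y^2) y := by
        have := (hasDerivAt_pow 3 y).div_const 3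
        refine this.congr_deriv ?_
        push_cast
        ring
      have := (((hasDerivAt_id y).sub h3).add h4).sub h2
      exact this)
    (fun y hy => by
      simp only [mem_Ioo] at hy
      have hy1 : 1 + y > 0 := by linarith [hy.1]
      show (0:ℝ) ≤ 1 - y + y^2 - 1/(1+y)
      have h : 1 - y + y^2 - 1/(1+y) = y^3/(1+y) := by field_simp; ring
      rw [h]
      exact div_nonneg (pow_nonneg (le_of_lt hy.1) 3) (le_of_lt hy1))
    h0 h1
  linarith
lemma core_ineq {x : ℝ} (h0 : 0 < x) (h1 : x < 1) :
    Real.log (1 + x^2) < (1+x) * Real.log (1+x) + (1-x) * Real.log (1-x) := by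
  have f3 : Real.log (1 + x^2) ≤ x^2 - (x^2)^2/2 + (x^2)^3/3 :=
    lem_log1add_le (by positivity) (by nlinarith)
  have f1 : x - x^2/2 + x^3/3 - x^4/4 ≤ Real.log (1 + x) := lem_log1add h0.le h1
  have f1' : (1+x) * (x - x^2/2 + x^3/3 - x^4/4) ≤ (1+x) * Real.log (1+x) :=
    mul_le_mul_of_nonneg_left f1 (by linarith)
  have f2 : -x + x^2/2 + x^3/6 ≤ (1-x) * Real.log (1-x) := lem_onesub_mul_log h0.le h1
  have margin : 0 < x^4 * (7/12 - x/4 - x^2/3) :=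
    mul_pos (pow_pos h0 4) (by nlinarith)
  nlinarith [f1', f2, f3, margin]

lemma keylog {a b : ℝ} (ha : 0 < a) (hb : 0 < b) (hba : b < a) :
    (a+b) * Real.log ((a^2+b^2)/2) < 2*(a*Real.log a + b*Real.log b) := by
  set s : ℝ := (a+b)/2 with hs_def
  set x : ℝ := (a-b)/(a+b) with hx_def
  have hab : 0 < a + b := by linarith
  have hs : 0 < s := by positivity
  have hx0 : 0 < x := by apply div_pos <;> linarith
  have hx1 : x < 1 := by rw [div_lt_one hab]; linarith
  have ea : a = s*(1+x) := by
    rw [hs_def, hx_def]; field_simp; ring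
  have eb : b = s*(1-x) := by
    rw [hs_def, hx_def]; field_simp; ring
  have em : (a^2+b^2)/2 = s^2*(1+x^2) := by
    rw [hs_def, hx_def]; field_simp; ring
  have la : Real.log a = Real.log s + Real.log (1+x) := by
    rw [ea, Real.log_mul hs.ne' (by positivity)]
  have lb : Real.log b = Real.log s + Real.log (1-x) := by
    rw [eb, Real.log_mul hs.ne' (by nlinarith)]
  have lm : Real.log ((a^2+b^2)/2) = 2*Real.log s + Real.log (1+x^2) := by
    rw [em, Real.log_mul (by positivity) (by positivity), Real.log_pow]
    push_cast; ring
  have hcore := core_ineq hx0 hx1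
  rw [la, lb, lm, ea, eb]
  nlinarith [mul_lt_mul_of_pos_left hcore (by linarith : (0:ℝ) < 2*s)]
lemma keylog' {a b : ℝ} (ha : 0 < a) (hb : 0 < b) (hab : a ≠ b) :
    (a+b) * Real.log ((a^2+b^2)/2) < 2*(a*Real.log a + b*Real.log b) := by
  rcases lt_or_gt_of_ne hab with h | h
  · have := keylog hb ha h
    rw [show b^2+a^2 = a^2+b^2 from by ring] at this
    linarith
  · exact keylog ha hb h

lemma A2_lt_S {a b : ℝ} (ha : 0 < a) (hb : 0 < b) (hab : a ≠ b) :
    ((a^2+b^2)/2) ^ ((1:ℝ)/2) < (a ^ a * b ^ b) ^ (1/(a+b)) := by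
  have hab' : 0 < a + b := by linarith
  have hm : 0 < (a^2+b^2)/2 := by positivity
  have hprod : 0 < a ^ a * b ^ b := mul_pos (Real.rpow_pos_of_pos ha a) (Real.rpow_pos_of_pos hb b)
  rw [Real.rpow_def_of_pos hm, Real.rpow_def_of_pos hprod]
  apply Real.exp_lt_exp.mpr
  have lprod : Real.log (a ^ a * b ^ b) = a * Real.log a + b * Real.log b := by
    rw [Real.log_mul (Real.rpow_pos_of_pos ha a).ne' (Real.rpow_pos_of_pos hb b).ne',
      Real.log_rpow ha, Real.log_rpow hb]
  rw [lprod]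
  have key := keylog' ha hb hab
  rw [mul_one_div, mul_one_div, div_lt_div_iff₀ (by norm_num) hab']
  linarith
theorem power_mean_lt_S (a b : ℝ) (ha : 0 < a) (hb : 0 < b) (hab : a ≠ b)
    (k : ℝ) (hk : 0 < k) (hk2 : k ≤ 2) :
    ((a ^ k + b ^ k) / 2) ^ (1 / k) < (a ^ a * b ^ b) ^ (1 / (a + b)) := by
  have hmono : ((a ^ k + b ^ k) / 2) ^ (1 / k) ≤ ((a^2+b^2)/2) ^ ((1:ℝ)/2) := by
    set p : ℝ := 2 / k with hp_def
    have hp1 : 1 ≤ p := by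
      rw [hp_def, le_div_iff₀ hk]; linarith
    have hu : 0 < a ^ k := Real.rpow_pos_of_pos ha k
    have hv : 0 < b ^ k := Real.rpow_pos_of_pos hb k
    have hconv := (convexOn_rpow hp1).2 (mem_Ici.mpr hu.le) (mem_Ici.mpr hv.le)
      (by norm_num : (0:ℝ) ≤ 1/2) (by norm_num : (0:ℝ) ≤ 1/2) (by norm_num)
    simp only [smul_eq_mul] at hconv
    have hup : (a ^ k) ^ p = a ^ 2 := by
      rw [← Real.rpow_natCast a 2, ← Real.rpow_mul ha.le]
      congr 1
      rw [hp_def]; field_simp; norm_num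
    have hvp : (b ^ k) ^ p = b ^ 2 := by
      rw [← Real.rpow_natCast b 2, ← Real.rpow_mul hb.le]
      congr 1
      rw [hp_def]; field_simp; norm_num
    have h1 : ((a ^ k + b ^ k) / 2) ^ p ≤ (a^2+b^2)/2 := by
      have : (1/2) * (a^k) + (1/2) * (b^k) = (a^k + b^k)/2 := by ring
      rw [this] at hconv
      calc ((a ^ k + b ^ k) / 2) ^ p ≤ 1/2 * (a^k)^p + 1/2 * (b^k)^p := hconv
        _ = (a^2+b^2)/2 := by rw [hup, hvp]; ring
    have hX : (0:ℝ) ≤ (a ^ k + b ^ k) / 2 := by positivity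
    have hrw : ((a ^ k + b ^ k) / 2) ^ (1/k) = (((a ^ k + b ^ k) / 2) ^ p) ^ ((1:ℝ)/2) := by
      rw [← Real.rpow_mul hX]
      congr 1
      rw [hp_def]; field_simp
    rw [hrw]
    exact Real.rpow_le_rpow (by positivity) h1 (by norm_num)
  exact lt_of_le_of_lt hmono (A2_lt_S ha hb hab)

end PowerMeanAux
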